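/- For every dimension d ≥ 2, every horizon T ≥ 1, every D > 0 and G > 0, and every deterministic player strategy σ, there exist loss vectors m_1, …, m_T ∈ ℝ^d with ‖m_t‖ = G for all t such that, letting w_t = σ_t(m_1, …, m_{t−1}) be the player's actions, the regret satisfies R = Σ_{t=1}^T ⟨m_t, w_t⟩ − min_{w ∈ 𝒟} ⟨Σ_{t=1}^T m_t, w⟩ ≥ 0.5·D·G·√T. -/

import Mathlib

open scoped InnerProductSpace BigOperators


lemma exists_pick {d : ℕ} (hd : 2 ≤ d) {G : ℝ} (hG : 0 < G)
    (w S : EuclideanSpace ℝ (Fin d)) :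
    ∃ m : EuclideanSpace ℝ (Fin d), ‖m‖ = G ∧ ⟪m, w⟫_ℝ = 0 ∧ 0 ≤ ⟪m, S⟫_ℝ := by
  set K := (ℝ ∙ w)ᗮ with hK
  have hdim : 1 ≤ Module.finrank ℝ K := by
    have h1 : Module.finrank ℝ (ℝ ∙ w) + Module.finrank ℝ K =
        Module.finrank ℝ (EuclideanSpace ℝ (Fin d)) :=
      Submodule.finrank_add_finrank_orthogonal _
    have h2 : Module.finrank ℝ (ℝ ∙ w) ≤ 1 := by
      rcases eq_or_ne w 0 with h | h
      · subst h; rw [Submodule.span_zero_singleton]; simp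
      · rw [finrank_span_singleton h]
    have h3 : Module.finrank ℝ (EuclideanSpace ℝ (Fin d)) = d := by simp
    omega
  -- a nonzero element of K
  have hKne : K ≠ ⊥ := by
    intro h
    rw [h] at hdim
    simp at hdim
  obtain ⟨x, hxK, hx0⟩ := Submodule.exists_mem_ne_zero_of_ne_bot hKne
  set P : EuclideanSpace ℝ (Fin d) := (K.orthogonalProjectionOnto S : EuclideanSpace ℝ (Fin d)) with hP
  have hPK : P ∈ K := (K.orthogonalProjectionOnto S).2
  have hsub : S - P ∈ Kᗮ := K.sub_starProjection_mem_orthogonal S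
  have key : ∀ u ∈ K, ⟪u, S⟫_ℝ = ⟪u, P⟫_ℝ := by
    intro u hu
    have := hsub u hu
    have h' : ⟪u, S - P⟫_ℝ = 0 := this
    rw [inner_sub_right] at h'
    linarith
  by_cases hP0 : P = 0
  · refine ⟨(G / ‖x‖) • x, ?_, ?_, ?_⟩
    · rw [norm_smul]
      have : ‖x‖ ≠ 0 := norm_ne_zero_iff.2 hx0
      field_simp
      rw [Real.norm_eq_abs, abs_of_pos (div_pos hG (norm_pos_iff.2 hx0))]
      field_simp
    · have hm : (G / ‖x‖) • x ∈ K := K.smul_mem _ hxK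
      have := hm w (Submodule.mem_span_singleton_self w)
      rwa [real_inner_comm] at this
    · rw [key _ (K.smul_mem _ hxK), hP0, inner_zero_right]
  · refine ⟨(G / ‖P‖) • P, ?_, ?_, ?_⟩
    · rw [norm_smul]
      have : ‖P‖ ≠ 0 := norm_ne_zero_iff.2 hP0
      field_simp
      rw [Real.norm_eq_abs, abs_of_pos (div_pos hG (norm_pos_iff.2 hP0))]
      field_simp
    · have hm : (G / ‖P‖) • P ∈ K := K.smul_mem _ hPK
      have := hm w (Submodule.mem_span_singleton_self w)
      rwa [real_inner_comm] at this
    · rw [key _ (K.smul_mem _ hPK), real_inner_smul_left, real_inner_self_eq_norm_sq]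
      positivity

noncomputable def pick (d : ℕ) (G : ℝ) (w S : EuclideanSpace ℝ (Fin d)) :
    EuclideanSpace ℝ (Fin d) :=
  if h : 2 ≤ d ∧ 0 < G then Classical.choose (exists_pick h.1 h.2 w S) else 0

lemma pick_spec {d : ℕ} (hd : 2 ≤ d) {G : ℝ} (hG : 0 < G)
    (w S : EuclideanSpace ℝ (Fin d)) :
    ‖pick d G w S‖ = G ∧ ⟪pick d G w S, w⟫_ℝ = 0 ∧ 0 ≤ ⟪pick d G w S, S⟫_ℝ := by
  rw [pick, dif_pos ⟨hd, hG⟩]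
  exact Classical.choose_spec (exists_pick hd hG w S)

/-- prefix of adversarial moves: `pref σ t j = m (j+1)` for `j : Fin t`. -/
noncomputable def pref (d : ℕ) (G : ℝ)
    (σ : (t : ℕ) → (Fin t → EuclideanSpace ℝ (Fin d)) → EuclideanSpace ℝ (Fin d)) :
    (t : ℕ) → (Fin t → EuclideanSpace ℝ (Fin d))
  | 0 => fun j => j.elim0
  | (t + 1) => Fin.snoc (pref d G σ t)
      (pick d G (σ t (pref d G σ t)) (∑ j, pref d G σ t j))

noncomputable def adv (d : ℕ) (G : ℝ)
    (σ : (t : ℕ) → (Fin t → EuclideanSpace ℝ (Fin d)) → EuclideanSpace ℝ (Fin d))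
    (t : ℕ) : EuclideanSpace ℝ (Fin d) :=
  if h : 0 < t then pref d G σ t ⟨t - 1, Nat.sub_lt h one_pos⟩ else 0

lemma pref_eq_adv (d : ℕ) (G : ℝ)
    (σ : (t : ℕ) → (Fin t → EuclideanSpace ℝ (Fin d)) → EuclideanSpace ℝ (Fin d)) :
    ∀ (t : ℕ) (j : Fin t), pref d G σ t j = adv d G σ (j.val + 1) := by
  intro t
  induction t with
  | zero => exact fun j => j.elim0
  | succ t ih =>
    intro j
    rcases lt_or_eq_of_le (Nat.lt_succ_iff.mp j.2) with h | h
    · have : j = Fin.castSucc ⟨j.val, h⟩ := by ext; simp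
      rw [this, pref, Fin.snoc_castSucc]
      exact ih ⟨j.val, h⟩
    · have hj : j = Fin.last t := by ext; simp [h]
      subst hj
      have hfin : (⟨t + 1 - 1, Nat.sub_lt (Nat.succ_pos t) one_pos⟩ : Fin (t + 1)) =
          Fin.last t := by ext; simp
      simp only [Fin.val_last]
      rw [adv, dif_pos (Nat.succ_pos t), hfin]

lemma adv_succ (d : ℕ) (G : ℝ)
    (σ : (t : ℕ) → (Fin t → EuclideanSpace ℝ (Fin d)) → EuclideanSpace ℝ (Fin d)) (t : ℕ) :
    adv d G σ (t + 1) =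
      pick d G (σ t fun j : Fin t => adv d G σ (j.val + 1))
        (∑ s ∈ Finset.Icc 1 t, adv d G σ s) := by
  have hfin : (⟨t + 1 - 1, Nat.sub_lt (Nat.succ_pos t) one_pos⟩ : Fin (t + 1)) =
      Fin.last t := by ext; simp
  have h1 : adv d G σ (t + 1) = pref d G σ (t + 1) (Fin.last t) := by
    rw [adv, dif_pos (Nat.succ_pos t), hfin]
  have hfun : pref d G σ t = fun j : Fin t => adv d G σ (j.val + 1) :=
    funext (pref_eq_adv d G σ t)
  have hsum : ∑ j : Fin t, adv d G σ (j.val + 1) = ∑ s ∈ Finset.Icc 1 t, adv d G σ s := by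
    rw [Fin.sum_univ_eq_sum_range (fun j => adv d G σ (j + 1)) t,
      show Finset.Icc 1 t = Finset.Ico 1 (t + 1) from (Finset.Ico_add_one_right_eq_Icc 1 t).symm,
      Finset.sum_Ico_eq_sum_range]
    simp [Nat.add_comm]
  rw [h1, pref, Fin.snoc_last]
  simp only [hfun]
  rw [hsum]

theorem stmt0 (d T : ℕ) (hd : 2 ≤ d) (hT : 1 ≤ T) (D G : ℝ) (hD : 0 < D) (hG : 0 < G)
    (σ : (t : ℕ) → (Fin t → EuclideanSpace ℝ (Fin d)) → EuclideanSpace ℝ (Fin d))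
    (hσ : ∀ t ms, σ t ms ∈ Metric.closedBall (0 : EuclideanSpace ℝ (Fin d)) (D / 2)) :
    ∃ m : ℕ → EuclideanSpace ℝ (Fin d),
      (∀ t ∈ Finset.Icc 1 T, ‖m t‖ = G) ∧
      (let w : ℕ → EuclideanSpace ℝ (Fin d) :=
        fun t => σ (t - 1) (fun j => m (j.val + 1));
       (∑ t ∈ Finset.Icc 1 T, ⟪m t, w t⟫_ℝ) -
          (⨅ v : Metric.closedBall (0 : EuclideanSpace ℝ (Fin d)) (D / 2),
            ⟪∑ t ∈ Finset.Icc 1 T, m t, (v : EuclideanSpace ℝ (Fin d))⟫_ℝ) ≥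
        0.5 * D * G * Real.sqrt T) := by
  set m : ℕ → EuclideanSpace ℝ (Fin d) := adv d G σ with hm
  -- each move has norm G and is orthogonal to player's action, and correlated with past
  have hspec : ∀ t : ℕ, ‖m (t + 1)‖ = G ∧
      ⟪m (t + 1), σ t fun j : Fin t => m (j.val + 1)⟫_ℝ = 0 ∧
      0 ≤ ⟪m (t + 1), ∑ s ∈ Finset.Icc 1 t, m s⟫_ℝ := by
    intro t
    rw [hm, adv_succ]
    exact pick_spec hd hG _ _
  refine ⟨m, ?_, ?_⟩
  · intro t ht
    simp only [Finset.mem_Icc] at ht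
    obtain ⟨t, rfl⟩ : ∃ s, t = s + 1 := ⟨t - 1, by omega⟩
    exact (hspec t).1
  intro w
  -- player's total loss is 0
  have hzero : ∀ t ∈ Finset.Icc 1 T, ⟪m t, w t⟫_ℝ = 0 := by
    intro t ht
    simp only [Finset.mem_Icc] at ht
    obtain ⟨t, rfl⟩ : ∃ s, t = s + 1 := ⟨t - 1, by omega⟩
    have := (hspec t).2.1
    simpa [w] using this
  -- the running sum grows
  set S : EuclideanSpace ℝ (Fin d) := ∑ t ∈ Finset.Icc 1 T, m t with hS
  have hgrow : ∀ t : ℕ, (t : ℝ) * G ^ 2 ≤ ‖∑ s ∈ Finset.Icc 1 t, m s‖ ^ 2 := by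
    intro t
    induction t with
    | zero => simp
    | succ t ih =>
      have hsum : ∑ s ∈ Finset.Icc 1 (t + 1), m s =
          (∑ s ∈ Finset.Icc 1 t, m s) + m (t + 1) := by
        rw [← Finset.sum_Icc_succ_top (by omega : 1 ≤ t + 1)]
      rw [hsum, ← real_inner_self_eq_norm_sq, inner_add_add_self,
        real_inner_self_eq_norm_sq, real_inner_self_eq_norm_sq, (hspec t).1]
      have h1 := (hspec t).2.2
      have hc : ⟪∑ s ∈ Finset.Icc 1 t, m s, m (t + 1)⟫_ℝ =
          ⟪m (t + 1), ∑ s ∈ Finset.Icc 1 t, m s⟫_ℝ := real_inner_comm _ _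
      push_cast
      nlinarith
  have hSnorm : G * Real.sqrt T ≤ ‖S‖ := by
    have := hgrow T
    rw [hS] at *
    nlinarith [Real.sq_sqrt (Nat.cast_nonneg T : (0:ℝ) ≤ T), Real.sqrt_nonneg (T : ℝ),
      norm_nonneg (∑ t ∈ Finset.Icc 1 T, m t), mul_pos hG (Real.sqrt_pos.mpr
        (by exact_mod_cast Nat.pos_of_ne_zero (by omega) : (0:ℝ) < T))]
  have hSne : S ≠ 0 := by
    intro h
    rw [h, norm_zero] at hSnorm
    have : 0 < G * Real.sqrt T := mul_pos hG (Real.sqrt_pos.mpr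
      (by exact_mod_cast Nat.pos_of_ne_zero (by omega)))
    linarith
  -- bound the infimum
  set v₀ : EuclideanSpace ℝ (Fin d) := -((D / 2 / ‖S‖) • S) with hv₀
  have hv₀mem : v₀ ∈ Metric.closedBall (0 : EuclideanSpace ℝ (Fin d)) (D / 2) := by
    have hSpos : 0 < ‖S‖ := norm_pos_iff.mpr hSne
    rw [Metric.mem_closedBall, dist_zero_right, hv₀, norm_neg, norm_smul,
      Real.norm_eq_abs, abs_of_pos (div_pos (by linarith) hSpos),
      div_mul_cancel₀ _ hSpos.ne']
  have hinner : ⟪S, v₀⟫_ℝ = -(D / 2 * ‖S‖) := by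
    rw [hv₀, inner_neg_right, real_inner_smul_right, real_inner_self_eq_norm_sq]
    have hSpos : 0 < ‖S‖ := norm_pos_iff.mpr hSne
    field_simp
  have hbdd : BddBelow (Set.range fun v : Metric.closedBall
      (0 : EuclideanSpace ℝ (Fin d)) (D / 2) => ⟪S, (v : EuclideanSpace ℝ (Fin d))⟫_ℝ) := by
    refine ⟨-(‖S‖ * (D / 2)), ?_⟩
    rintro x ⟨v, rfl⟩
    have h1 : |⟪S, (v : EuclideanSpace ℝ (Fin d))⟫_ℝ| ≤ ‖S‖ * ‖(v : EuclideanSpace ℝ (Fin d))‖ :=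
      abs_real_inner_le_norm _ _
    have h2 : ‖(v : EuclideanSpace ℝ (Fin d))‖ ≤ D / 2 := by
      have := v.2
      rwa [Metric.mem_closedBall, dist_zero_right] at this
    have h3 : ‖S‖ * ‖(v : EuclideanSpace ℝ (Fin d))‖ ≤ ‖S‖ * (D / 2) :=
      mul_le_mul_of_nonneg_left h2 (norm_nonneg S)
    have := (abs_le.mp h1).1
    simp only
    linarith
  have hinf : (⨅ v : Metric.closedBall (0 : EuclideanSpace ℝ (Fin d)) (D / 2),
      ⟪S, (v : EuclideanSpace ℝ (Fin d))⟫_ℝ) ≤ -(D / 2 * ‖S‖) := by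
    rw [← hinner]
    exact ciInf_le hbdd ⟨v₀, hv₀mem⟩
  have hsum0 : ∑ t ∈ Finset.Icc 1 T, ⟪m t, w t⟫_ℝ = 0 := Finset.sum_eq_zero hzero
  rw [hsum0]
  have : 0.5 * D * G * Real.sqrt T ≤ D / 2 * ‖S‖ := by
    have h1 : D / 2 * (G * Real.sqrt T) ≤ D / 2 * ‖S‖ :=
      mul_le_mul_of_nonneg_left hSnorm (by positivity)
    nlinarith
  linarith [hinf]
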